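/- For each integer n ≥ 1, the function g(z) = 1/z + z^n/(n+2) satisfies Re(z g(z)) > |z² g'(z) + z g(z)| for all z in the punctured unit disc E. -/

import Mathlib

open Complex

theorem stmt6 (n : ℕ) (hn : 1 ≤ n)
    (g : ℂ → ℂ) (hg : ∀ z : ℂ, z ≠ 0 → g z = z⁻¹ + z ^ n / (n + 2)) :
    ∀ z : ℂ, 0 < ‖z‖ → ‖z‖ < 1 →
      (z * g z).re > ‖z ^ 2 * deriv g z + z * g z‖ := by
  obtain ⟨m, rfl⟩ : ∃ m, n = m + 1 := ⟨n - 1, by omega⟩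
  intro z hz0 hz1
  have hz : z ≠ 0 := by
    intro h; simp [h] at hz0
  set n : ℕ := m + 1 with hn'
  have hne : ((n : ℂ) + 2) ≠ 0 := by
    simp only [hn']
    push_cast
    have h : ((m : ℂ) + 1 + 2) = ((m + 3 : ℕ) : ℂ) := by push_cast; ring
    rw [h]
    exact Nat.cast_ne_zero.mpr (by omega)
  have hd : deriv g z = -(z ^ 2)⁻¹ + n * z ^ (n - 1) / ((n : ℂ) + 2) := by
    have hf : HasDerivAt (fun w : ℂ => w⁻¹ + w ^ n / ((n : ℂ) + 2))
        (-(z ^ 2)⁻¹ + n * z ^ (n - 1) / ((n : ℂ) + 2)) z :=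
      (hasDerivAt_inv hz).add ((hasDerivAt_pow n z).div_const ((n : ℂ) + 2))
    have heq : g =ᶠ[nhds z] fun w : ℂ => w⁻¹ + w ^ n / ((n : ℂ) + 2) := by
      filter_upwards [isOpen_compl_singleton.mem_nhds (by simpa using hz)] with w hw
      exact hg w hw
    rw [heq.deriv_eq]
    exact hf.deriv
  have h1 : z * g z = 1 + z ^ (n + 1) / ((n : ℂ) + 2) := by
    rw [hg z hz]
    field_simp
    ring
  have h2 : z ^ 2 * deriv g z + z * g z = ((n : ℂ) + 1) * z ^ (n + 1) / ((n : ℂ) + 2) := by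
    rw [hd, h1, hn']
    have : m + 1 - 1 = m := rfl
    rw [this]
    field_simp
    ring
  set w : ℂ := z ^ (n + 1) with hw
  have hr1 : ‖w‖ < 1 := by
    rw [hw, norm_pow]
    exact pow_lt_one₀ (norm_nonneg z) hz1 (by omega)
  have habs : ‖((n : ℂ) + 1) * w / ((n : ℂ) + 2)‖
      = ((n : ℝ) + 1) * ‖w‖ / ((n : ℝ) + 2) := by
    rw [norm_div, norm_mul]
    congr 1
    · congr 1
      simpa using Complex.norm_natCast (n + 1)
    · simpa using Complex.norm_natCast (n + 2)
  have hre : (z * g z).re = 1 + (w / ((n : ℂ) + 2)).re := by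
    rw [h1]; simp
  have hre2 : (w / ((n : ℂ) + 2)).re = w.re / ((n : ℝ) + 2) := by
    have : ((n : ℂ) + 2) = ((n + 2 : ℝ) : ℂ) := by push_cast; ring
    rw [this, Complex.div_ofReal_re]
  have hwre : -‖w‖ ≤ w.re := by
    have := Complex.abs_re_le_norm w
    have h2 := abs_le.mp this
    linarith [h2.1]
  rw [h2, habs, hre, hre2]
  have hnpos : (0 : ℝ) < (n : ℝ) + 2 := by positivity
  rw [gt_iff_lt, div_lt_iff₀ hnpos]
  have hx : (1 + w.re / ((n : ℝ) + 2)) * ((n : ℝ) + 2) = ((n : ℝ) + 2) + w.re := by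
    field_simp
  rw [hx]
  nlinarith [norm_nonneg w, hwre, hr1]
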